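/- The regularization seminorm is nonincreasing in λ: for x^{(λ)} = (AᵀA + λ²MᵀM)⁻¹Aᵀb with ker(A) ∩ ker(M) = {0}, if 0 < λ₁ ≤ λ₂ then ‖M x^{(λ₂)}‖₂ ≤ ‖M x^{(λ₁)}‖₂. -/

import Mathlib

open Matrix

noncomputable def sqnorm {k : ℕ} (v : Fin k → ℝ) : ℝ := ∑ i, (v i)^2

lemma sqnorm_eq_dot {k : ℕ} (v : Fin k → ℝ) : sqnorm v = v ⬝ᵥ v := by
  simp [sqnorm, dotProduct, sq]

lemma sqnorm_nonneg {k : ℕ} (v : Fin k → ℝ) : 0 ≤ sqnorm v :=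
  Finset.sum_nonneg fun i _ => sq_nonneg _

lemma sqnorm_eq_zero {k : ℕ} {v : Fin k → ℝ} (h : sqnorm v = 0) : v = 0 := by
  funext i
  have := (Finset.sum_eq_zero_iff_of_nonneg (fun i _ => sq_nonneg (v i))).1 h i (Finset.mem_univ i)
  exact pow_eq_zero_iff (by norm_num) |>.1 this

-- symmetric dot swap
lemma dot_mulVec_symm {n : ℕ} {B : Matrix (Fin n) (Fin n) ℝ} (hB : Bᵀ = B)
    (x y : Fin n → ℝ) : x ⬝ᵥ (B *ᵥ y) = y ⬝ᵥ (B *ᵥ x) := by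
  rw [dotProduct_mulVec, ← mulVec_transpose, hB, dotProduct_comm]

/-- The regularization seminorm is nonincreasing in λ: for
`x^{(λ)} = (AᵀA + λ²MᵀM)⁻¹Aᵀb` with trivial kernel intersection, if
`0 < λ₁ ≤ λ₂` then `‖M x^{(λ₂)}‖₂ ≤ ‖M x^{(λ₁)}‖₂`. -/
theorem tikhonov_seminorm_antitone_in_lambda {m n p : ℕ}
    (A : Matrix (Fin m) (Fin n) ℝ) (M : Matrix (Fin p) (Fin n) ℝ)
    (b : Fin m → ℝ)
    (hker : ∀ x : Fin n → ℝ, A *ᵥ x = 0 → M *ᵥ x = 0 → x = 0)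
    (lam₁ lam₂ : ℝ) (h0 : 0 < lam₁) (h12 : lam₁ ≤ lam₂)
    (x₁ x₂ : Fin n → ℝ)
    (hx₁ : x₁ = (Aᵀ * A + lam₁ ^ 2 • (Mᵀ * M))⁻¹ *ᵥ (Aᵀ *ᵥ b))
    (hx₂ : x₂ = (Aᵀ * A + lam₂ ^ 2 • (Mᵀ * M))⁻¹ *ᵥ (Aᵀ *ᵥ b)) :
    Real.sqrt (sqnorm (M *ᵥ x₂)) ≤ Real.sqrt (sqnorm (M *ᵥ x₁)) := by
  rcases eq_or_lt_of_le h12 with rfl | hlt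
  · rw [hx₁, ← hx₂]
  set c : Fin n → ℝ := Aᵀ *ᵥ b with hc
  -- generic facts about B λ
  have hBsymm : ∀ lam : ℝ, (Aᵀ * A + lam ^ 2 • (Mᵀ * M))ᵀ = Aᵀ * A + lam ^ 2 • (Mᵀ * M) := by
    intro lam
    simp [transpose_add, transpose_mul, transpose_smul]
  have hquad : ∀ (lam : ℝ) (x : Fin n → ℝ),
      x ⬝ᵥ ((Aᵀ * A + lam ^ 2 • (Mᵀ * M)) *ᵥ x)
        = sqnorm (A *ᵥ x) + lam ^ 2 * sqnorm (M *ᵥ x) := by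
    intro lam x
    rw [sqnorm_eq_dot, sqnorm_eq_dot, add_mulVec, dotProduct_add, smul_mulVec,
      dotProduct_smul]
    have h1 : x ⬝ᵥ ((Aᵀ * A) *ᵥ x) = (A *ᵥ x) ⬝ᵥ (A *ᵥ x) := by
      rw [← mulVec_mulVec, dotProduct_mulVec, ← mulVec_transpose, dotProduct_comm,
        transpose_transpose]
    have h2 : x ⬝ᵥ ((Mᵀ * M) *ᵥ x) = (M *ᵥ x) ⬝ᵥ (M *ᵥ x) := by
      rw [← mulVec_mulVec, dotProduct_mulVec, ← mulVec_transpose, dotProduct_comm,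
        transpose_transpose]
    rw [h1, h2, smul_eq_mul]
  have hpd : ∀ lam : ℝ, 0 < lam → (Aᵀ * A + lam ^ 2 • (Mᵀ * M)).PosDef := by
    intro lam hlam
    rw [posDef_iff_dotProduct_mulVec]
    constructor
    · rw [IsHermitian]; simpa using hBsymm lam
    · intro x hx
      simp only [star_trivial]
      rw [hquad]
      have h1 := sqnorm_nonneg (A *ᵥ x)
      have h2 := sqnorm_nonneg (M *ᵥ x)
      rcases lt_or_eq_of_le h1 with h | h
      · positivity
      rcases lt_or_eq_of_le h2 with h' | h'
      · have : 0 < lam ^ 2 * sqnorm (M *ᵥ x) := by positivity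
        linarith
      exact absurd (hker x (sqnorm_eq_zero h.symm) (sqnorm_eq_zero h'.symm)) hx
  -- normal equations
  have hnorm : ∀ lam : ℝ, 0 < lam →
      (Aᵀ * A + lam ^ 2 • (Mᵀ * M)) *ᵥ ((Aᵀ * A + lam ^ 2 • (Mᵀ * M))⁻¹ *ᵥ c) = c := by
    intro lam hlam
    rw [mulVec_mulVec, mul_nonsing_inv _ ((isUnit_iff_isUnit_det _).1 (hpd lam hlam).isUnit),
      one_mulVec]
  have hB₁x : (Aᵀ * A + lam₁ ^ 2 • (Mᵀ * M)) *ᵥ x₁ = c := by rw [hx₁]; exact hnorm lam₁ h0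
  have hB₂x : (Aᵀ * A + lam₂ ^ 2 • (Mᵀ * M)) *ᵥ x₂ = c := by
    rw [hx₂]; exact hnorm lam₂ (h0.trans hlt)
  -- minimizer property: for B with B x = c, quadratic q(y) = yᵀBy - 2 yᵀc is minimized at x
  have hmin : ∀ (B : Matrix (Fin n) (Fin n) ℝ), Bᵀ = B → B.PosDef →
      ∀ (x y : Fin n → ℝ), B *ᵥ x = c →
      x ⬝ᵥ (B *ᵥ x) - 2 * (x ⬝ᵥ c) ≤ y ⬝ᵥ (B *ᵥ y) - 2 * (y ⬝ᵥ c) := by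
    intro B hBs hBpd x y hxc
    have key : y ⬝ᵥ (B *ᵥ y) - 2 * (y ⬝ᵥ c) - (x ⬝ᵥ (B *ᵥ x) - 2 * (x ⬝ᵥ c))
        = (y - x) ⬝ᵥ (B *ᵥ (y - x)) := by
      rw [← hxc, mulVec_sub, dotProduct_sub, sub_dotProduct, sub_dotProduct,
        dot_mulVec_symm hBs y x]
      ring
    have hnn : 0 ≤ (y - x) ⬝ᵥ (B *ᵥ (y - x)) := by
      rcases eq_or_ne (y - x) 0 with h | h
      · simp [h]
      · have := hBpd.dotProduct_mulVec_pos h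
        simp only [star_trivial] at this; exact this.le
    linarith [key ▸ hnn]
  -- define shorthand
  set a₁ := sqnorm (A *ᵥ x₁) with ha₁
  set a₂ := sqnorm (A *ᵥ x₂) with ha₂
  set s₁ := sqnorm (M *ᵥ x₁) with hs₁
  set s₂ := sqnorm (M *ᵥ x₂) with hs₂
  have h1 := hmin _ (hBsymm lam₁) (hpd lam₁ h0) x₁ x₂ hB₁x
  have h2 := hmin _ (hBsymm lam₂) (hpd lam₂ (h0.trans hlt)) x₂ x₁ hB₂x
  rw [hquad, hquad] at h1 h2
  -- combine: (lam₂² - lam₁²)(s₂ - s₁) ≤ 0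
  have hkey : s₂ ≤ s₁ := by
    have hsq : lam₁ ^ 2 < lam₂ ^ 2 := by nlinarith
    nlinarith [h1, h2]
  exact Real.sqrt_le_sqrt hkey
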